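/- arXiv:1705.04238 — 3 statements merged into one kernel-verified Lean document; each statement's English description precedes it below -/
import Mathlib

section
/- Let H be a quasitriangular bialgebra with universal R-matrix R, and let B ⊆ H be a right coideal subalgebra (Δ(B) ⊆ B⊗H). If K ∈ H is invertible and satisfies (K1') Kb = bK for all b ∈ B, and (K3') Δ(K) = R₂₁·K₂·R₁₂·K₁, then the element 𝒦 := R₂₁·K₂·R₁₂ ∈ H⊗H satisfies: (1) 𝒦·Δ(b) = Δ(b)·𝒦 for all b ∈ B; (2) (Δ⊗id)(𝒦) = R₃₂·𝒦₁₃·R₂₃; (3) (id⊗Δ)(𝒦) = R₃₂·𝒦₁₃·R₂₃·𝒦₁₂. -/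
open TensorProduct

/-- leg embedding `x ⊗ y ↦ x ⊗ y ⊗ 1` of `H ⊗ H` into `H ⊗ (H ⊗ H)`. -/
noncomputable def leg12 (R H : Type*) [CommRing R] [Ring H] [Bialgebra R H] :
    H ⊗[R] H →ₐ[R] H ⊗[R] (H ⊗[R] H) :=
  Algebra.TensorProduct.map (AlgHom.id R H) Algebra.TensorProduct.includeLeft

/-- leg embedding `x ⊗ y ↦ x ⊗ 1 ⊗ y`. -/
noncomputable def leg13 (R H : Type*) [CommRing R] [Ring H] [Bialgebra R H] :
    H ⊗[R] H →ₐ[R] H ⊗[R] (H ⊗[R] H) :=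
  Algebra.TensorProduct.map (AlgHom.id R H) Algebra.TensorProduct.includeRight

/-- leg embedding `x ⊗ y ↦ 1 ⊗ x ⊗ y`. -/
noncomputable def leg23 (R H : Type*) [CommRing R] [Ring H] [Bialgebra R H] :
    H ⊗[R] H →ₐ[R] H ⊗[R] (H ⊗[R] H) :=
  Algebra.TensorProduct.includeRight

/-- `Δ ⊗ id`, landing in `H ⊗ (H ⊗ H)`. -/
noncomputable def comulLeft (R H : Type*) [CommRing R] [Ring H] [Bialgebra R H] :
    H ⊗[R] H →ₐ[R] H ⊗[R] (H ⊗[R] H) :=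
  (Algebra.TensorProduct.assoc R R R H H H).toAlgHom.comp
    (Algebra.TensorProduct.map (Bialgebra.comulAlgHom R H) (AlgHom.id R H))

/-- `id ⊗ Δ`, landing in `H ⊗ (H ⊗ H)`. -/
noncomputable def comulRight (R H : Type*) [CommRing R] [Ring H] [Bialgebra R H] :
    H ⊗[R] H →ₐ[R] H ⊗[R] (H ⊗[R] H) :=
  Algebra.TensorProduct.map (AlgHom.id R H) (Bialgebra.comulAlgHom R H)

namespace Stmt2Aux

section
variable (R H : Type*) [CommRing R] [Ring H] [Bialgebra R H]

/-- cyclic permutation `x ⊗ (y ⊗ z) ↦ y ⊗ (z ⊗ x)` (legs: 1→3, 2→1, 3→2). -/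
noncomputable def cycP : H ⊗[R] (H ⊗[R] H) ≃ₐ[R] H ⊗[R] (H ⊗[R] H) :=
  (Algebra.TensorProduct.comm R H (H ⊗[R] H)).trans (Algebra.TensorProduct.assoc R R R H H H)

/-- flip of legs 1,2: `x ⊗ (y ⊗ z) ↦ y ⊗ (x ⊗ z)`. -/
noncomputable def flip12 : H ⊗[R] (H ⊗[R] H) ≃ₐ[R] H ⊗[R] (H ⊗[R] H) :=
  ((Algebra.TensorProduct.assoc R R R H H H).symm.trans
    (Algebra.TensorProduct.congr (Algebra.TensorProduct.comm R H H) AlgEquiv.refl)).trans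
    (Algebra.TensorProduct.assoc R R R H H H)

end

variable {R H : Type*} [CommRing R] [Ring H] [Bialgebra R H]

local notation "τ" => Algebra.TensorProduct.comm R H H

lemma comm_comm (x : H ⊗[R] H) : τ (τ x) = x := by
  induction x using TensorProduct.induction_on with
  | zero => simp
  | tmul a b => simp
  | add u v hu hv => simp [map_add, hu, hv]

lemma cycP_apply (a : H) (w : H ⊗[R] H) :
    cycP R H (a ⊗ₜ[R] w) = (Algebra.TensorProduct.assoc R R R H H H) (w ⊗ₜ[R] a) := by
  simp [cycP]

lemma cycP_leg13 (X : H ⊗[R] H) : cycP R H (leg13 R H X) = leg23 R H (τ X) := by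
  induction X using TensorProduct.induction_on with
  | zero => simp
  | tmul a b => simp [leg13, leg23, cycP]
  | add u v hu hv => simp only [map_add, hu, hv]

lemma cycP_leg12 (X : H ⊗[R] H) : cycP R H (leg12 R H X) = leg13 R H (τ X) := by
  induction X using TensorProduct.induction_on with
  | zero => simp
  | tmul a b => simp [leg13, leg12, cycP]
  | add u v hu hv => simp only [map_add, hu, hv]

lemma cycP_comulRight (X : H ⊗[R] H) :
    cycP R H (comulRight R H X) = comulLeft R H (τ X) := by
  induction X using TensorProduct.induction_on with
  | zero => simp
  | tmul a b => simp [comulRight, comulLeft, cycP_apply]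
  | add u v hu hv => simp only [map_add, hu, hv]

lemma leg12_eq (X : H ⊗[R] H) :
    leg12 R H X = (Algebra.TensorProduct.assoc R R R H H H) (X ⊗ₜ[R] (1 : H)) := by
  induction X using TensorProduct.induction_on with
  | zero => simp
  | tmul a b => simp [leg12]
  | add u v hu hv =>
      simp only [map_add, hu, hv, TensorProduct.add_tmul]

lemma flip12_assoc (u : H ⊗[R] H) (c : H) :
    flip12 R H ((Algebra.TensorProduct.assoc R R R H H H) (u ⊗ₜ[R] c)) =
      (Algebra.TensorProduct.assoc R R R H H H) ((τ u) ⊗ₜ[R] c) := by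
  simp [flip12]

lemma flip12_leg23 (X : H ⊗[R] H) : flip12 R H (leg23 R H X) = leg13 R H X := by
  induction X using TensorProduct.induction_on with
  | zero => simp
  | tmul a b => simp [leg13, leg23, flip12]
  | add u v hu hv => simp only [map_add, hu, hv]

lemma flip12_leg13 (X : H ⊗[R] H) : flip12 R H (leg13 R H X) = leg23 R H X := by
  induction X using TensorProduct.induction_on with
  | zero => simp
  | tmul a b => simp [leg13, leg23, flip12]
  | add u v hu hv => simp only [map_add, hu, hv]

/-- Key intertwiner: `(R₂₁)₁₂ · (Δᵒᵖ ⊗ id)(Y) = (Δ ⊗ id)(Y) · (R₂₁)₁₂`. -/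
lemma interC (Rm : H ⊗[R] H)
    (hR1 : ∀ x : H, Rm * Coalgebra.comul x = τ (Coalgebra.comul x) * Rm)
    (Y : H ⊗[R] H) :
    leg12 R H (τ Rm) * flip12 R H (comulLeft R H Y) =
      comulLeft R H Y * leg12 R H (τ Rm) := by
  induction Y using TensorProduct.induction_on with
  | zero => simp
  | tmul y z =>
      have h1 : comulLeft R H (y ⊗ₜ[R] z)
          = (Algebra.TensorProduct.assoc R R R H H H) ((Coalgebra.comul y) ⊗ₜ[R] z) := by
        simp [comulLeft]
      have hcomm : τ Rm * τ (Coalgebra.comul y) = Coalgebra.comul y * τ Rm := by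
        have h := congrArg (fun t => τ t) (hR1 y)
        simpa [map_mul, comm_comm] using h
      rw [h1, flip12_assoc, leg12_eq, ← map_mul, ← map_mul,
        Algebra.TensorProduct.tmul_mul_tmul, Algebra.TensorProduct.tmul_mul_tmul,
        one_mul, mul_one, hcomm]
  | add u v hu hv => simp only [map_add, mul_add, add_mul, hu, hv]

lemma leg12_mul_K3 (X : H ⊗[R] H) (k : H) :
    leg12 R H X * ((1 : H) ⊗ₜ[R] ((1 : H) ⊗ₜ[R] k)) =
      ((1 : H) ⊗ₜ[R] ((1 : H) ⊗ₜ[R] k)) * leg12 R H X := by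
  induction X using TensorProduct.induction_on with
  | zero => simp
  | tmul a b => simp [leg12, Algebra.TensorProduct.tmul_mul_tmul]
  | add u v hu hv => simp only [map_add, add_mul, mul_add, hu, hv]

lemma leg13_mul_K2 (X : H ⊗[R] H) (k : H) :
    leg13 R H X * ((1 : H) ⊗ₜ[R] (k ⊗ₜ[R] (1 : H))) =
      ((1 : H) ⊗ₜ[R] (k ⊗ₜ[R] (1 : H))) * leg13 R H X := by
  induction X using TensorProduct.induction_on with
  | zero => simp
  | tmul a b => simp [leg13, Algebra.TensorProduct.tmul_mul_tmul]
  | add u v hu hv => simp only [map_add, add_mul, mul_add, hu, hv]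

lemma Kcomm (B : Subalgebra R H) (K : H) (hK1' : ∀ b ∈ B, K * b = b * K)
    (w : ↥B ⊗[R] H) :
    ((1 : H) ⊗ₜ[R] K) *
        τ (TensorProduct.map B.val.toLinearMap (LinearMap.id : H →ₗ[R] H) w) =
      τ (TensorProduct.map B.val.toLinearMap (LinearMap.id : H →ₗ[R] H) w) *
        ((1 : H) ⊗ₜ[R] K) := by
  induction w using TensorProduct.induction_on with
  | zero => rw [LinearMap.map_zero, map_zero, mul_zero, zero_mul]
  | tmul c d =>
      simp only [TensorProduct.map_tmul, Algebra.TensorProduct.comm_tmul,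
        Algebra.TensorProduct.tmul_mul_tmul, one_mul, mul_one, LinearMap.id_coe, id_eq,
        AlgHom.toLinearMap_apply, Subalgebra.coe_val]
      rw [hK1' c c.2]
  | add u v hu hv => simp only [map_add, add_mul, mul_add, hu, hv]

/-- pure rearrangement in a monoid. -/
lemma rearrange {M : Type*} [Monoid M] (a12 a13 a23 k3 b23 k2 b13 b12 : M)
    (c1 : a12 * (a13 * a23) = a23 * (a13 * a12))
    (c2 : a12 * k3 = k3 * a12)
    (c3 : a12 * (b23 * b13) = b13 * (b23 * a12))
    (c4 : k2 * b13 = b13 * k2) :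
    (a12 * a13) * (a23 * k3 * b23 * k2) * (b13 * b12) =
      a23 * (a13 * k3 * b13) * b23 * (a12 * k2 * b12) := by
  calc (a12 * a13) * (a23 * k3 * b23 * k2) * (b13 * b12)
      = a12 * (a13 * a23) * (k3 * (b23 * (k2 * (b13 * b12)))) := by
        simp only [mul_assoc]
    _ = a23 * (a13 * a12) * (k3 * (b23 * (k2 * (b13 * b12)))) := by rw [c1]
    _ = a23 * a13 * ((a12 * k3) * (b23 * (k2 * (b13 * b12)))) := by
        simp only [mul_assoc]
    _ = a23 * a13 * ((k3 * a12) * (b23 * (k2 * (b13 * b12)))) := by rw [c2]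
    _ = a23 * a13 * (k3 * (a12 * (b23 * ((k2 * b13) * b12)))) := by
        simp only [mul_assoc]
    _ = a23 * a13 * (k3 * (a12 * (b23 * ((b13 * k2) * b12)))) := by rw [c4]
    _ = a23 * a13 * (k3 * ((a12 * (b23 * b13)) * (k2 * b12))) := by
        simp only [mul_assoc]
    _ = a23 * a13 * (k3 * ((b13 * (b23 * a12)) * (k2 * b12))) := by rw [c3]
    _ = a23 * (a13 * k3 * b13) * b23 * (a12 * k2 * b12) := by
        simp only [mul_assoc]

end Stmt2Aux

/-- Let `H` be a quasitriangular bialgebra with universal `R`-matrix `Rm` and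
let `B ⊆ H` be a right coideal subalgebra.  If `K ∈ H` is invertible and satisfies
(K1') `K b = b K` for all `b ∈ B` and (K3') `Δ(K) = R₂₁ K₂ R₁₂ K₁`, then the element
`𝒦 = R₂₁ K₂ R₁₂` satisfies (1) `𝒦 Δ(b) = Δ(b) 𝒦` for `b ∈ B`,
(2) `(Δ ⊗ id)(𝒦) = R₃₂ 𝒦₁₃ R₂₃` and (3) `(id ⊗ Δ)(𝒦) = R₃₂ 𝒦₁₃ R₂₃ 𝒦₁₂`. -/
theorem stmt_2 {R : Type*} [CommRing R] {H : Type*} [Ring H] [Bialgebra R H]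
    (Rm : H ⊗[R] H) (hRunit : IsUnit Rm)
    (hR1 : ∀ x : H, Rm * Coalgebra.comul x =
      (Algebra.TensorProduct.comm R H H) (Coalgebra.comul x) * Rm)
    (hR2 : comulLeft R H Rm = leg13 R H Rm * leg23 R H Rm)
    (hR3 : comulRight R H Rm = leg13 R H Rm * leg12 R H Rm)
    (B : Subalgebra R H)
    (hB : ∀ b ∈ B, Coalgebra.comul (R := R) b ∈
      LinearMap.range (TensorProduct.map B.val.toLinearMap (LinearMap.id : H →ₗ[R] H)))
    (K : H) (hKunit : IsUnit K)
    (hK1' : ∀ b ∈ B, K * b = b * K)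
    (hK3' : Coalgebra.comul K =
      (Algebra.TensorProduct.comm R H H) Rm *
        (Algebra.TensorProduct.includeRight : H →ₐ[R] H ⊗[R] H) K * Rm *
        (Algebra.TensorProduct.includeLeft : H →ₐ[R] H ⊗[R] H) K) :
    (∀ b ∈ B,
        ((Algebra.TensorProduct.comm R H H) Rm *
            (Algebra.TensorProduct.includeRight : H →ₐ[R] H ⊗[R] H) K * Rm) *
          Coalgebra.comul b =
        Coalgebra.comul b *
          ((Algebra.TensorProduct.comm R H H) Rm *
            (Algebra.TensorProduct.includeRight : H →ₐ[R] H ⊗[R] H) K * Rm)) ∧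
    comulLeft R H
        ((Algebra.TensorProduct.comm R H H) Rm *
          (Algebra.TensorProduct.includeRight : H →ₐ[R] H ⊗[R] H) K * Rm) =
      leg23 R H ((Algebra.TensorProduct.comm R H H) Rm) *
        leg13 R H ((Algebra.TensorProduct.comm R H H) Rm *
          (Algebra.TensorProduct.includeRight : H →ₐ[R] H ⊗[R] H) K * Rm) *
        leg23 R H Rm ∧
    comulRight R H
        ((Algebra.TensorProduct.comm R H H) Rm *
          (Algebra.TensorProduct.includeRight : H →ₐ[R] H ⊗[R] H) K * Rm) =
      leg23 R H ((Algebra.TensorProduct.comm R H H) Rm) *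
        leg13 R H ((Algebra.TensorProduct.comm R H H) Rm *
          (Algebra.TensorProduct.includeRight : H →ₐ[R] H ⊗[R] H) K * Rm) *
        leg23 R H Rm *
        leg12 R H ((Algebra.TensorProduct.comm R H H) Rm *
          (Algebra.TensorProduct.includeRight : H →ₐ[R] H ⊗[R] H) K * Rm) := by
  open Stmt2Aux in
  -- abbreviations
  have hKR : (Algebra.TensorProduct.includeRight : H →ₐ[R] H ⊗[R] H) K = (1 : H) ⊗ₜ[R] K :=
    Algebra.TensorProduct.includeRight_apply K
  -- (Δ ⊗ id)(R₂₁) = R₃₂ · R₃₁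
  have hCL21 : comulLeft R H ((Algebra.TensorProduct.comm R H H) Rm) =
      leg23 R H ((Algebra.TensorProduct.comm R H H) Rm) *
        leg13 R H ((Algebra.TensorProduct.comm R H H) Rm) := by
    have h := congrArg (Stmt2Aux.cycP R H) hR3
    rwa [Stmt2Aux.cycP_comulRight, map_mul, Stmt2Aux.cycP_leg13, Stmt2Aux.cycP_leg12] at h
  -- (id ⊗ Δ)(R₂₁) = (R₂₁)₁₂ · R₃₁
  have hCR21 : comulRight R H ((Algebra.TensorProduct.comm R H H) Rm) =
      leg12 R H ((Algebra.TensorProduct.comm R H H) Rm) *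
        leg13 R H ((Algebra.TensorProduct.comm R H H) Rm) := by
    apply (Stmt2Aux.cycP R H).injective
    rw [Stmt2Aux.cycP_comulRight, Stmt2Aux.comm_comm, hR2, map_mul,
      Stmt2Aux.cycP_leg12, Stmt2Aux.cycP_leg13, Stmt2Aux.comm_comm]
  refine ⟨?_, ?_, ?_⟩
  · -- part (1)
    intro b hb
    obtain ⟨w, hw⟩ := hB b hb
    have hKd : ((1 : H) ⊗ₜ[R] K) *
        (Algebra.TensorProduct.comm R H H) (Coalgebra.comul b) =
        (Algebra.TensorProduct.comm R H H) (Coalgebra.comul b) * ((1 : H) ⊗ₜ[R] K) := by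
      rw [← hw]; exact Stmt2Aux.Kcomm B K hK1' w
    have h1 := hR1 b
    have h2 : (Algebra.TensorProduct.comm R H H) Rm *
        (Algebra.TensorProduct.comm R H H) (Coalgebra.comul b) =
        Coalgebra.comul b * (Algebra.TensorProduct.comm R H H) Rm := by
      have h := congrArg (fun t => (Algebra.TensorProduct.comm R H H) t) h1
      simpa [map_mul, Stmt2Aux.comm_comm] using h
    rw [hKR]
    calc (Algebra.TensorProduct.comm R H H) Rm * ((1 : H) ⊗ₜ[R] K) * Rm * Coalgebra.comul b
        = (Algebra.TensorProduct.comm R H H) Rm * ((1 : H) ⊗ₜ[R] K) *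
            ((Algebra.TensorProduct.comm R H H) (Coalgebra.comul b) * Rm) := by
          rw [mul_assoc, h1]
      _ = (Algebra.TensorProduct.comm R H H) Rm *
            (((1 : H) ⊗ₜ[R] K) * (Algebra.TensorProduct.comm R H H) (Coalgebra.comul b)) *
            Rm := by simp only [mul_assoc]
      _ = (Algebra.TensorProduct.comm R H H) Rm *
            ((Algebra.TensorProduct.comm R H H) (Coalgebra.comul b) * ((1 : H) ⊗ₜ[R] K)) *
            Rm := by rw [hKd]
      _ = ((Algebra.TensorProduct.comm R H H) Rm *
            (Algebra.TensorProduct.comm R H H) (Coalgebra.comul b)) * (((1 : H) ⊗ₜ[R] K) *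
            Rm) := by simp only [mul_assoc]
      _ = Coalgebra.comul b *
            ((Algebra.TensorProduct.comm R H H) Rm * (((1 : H) ⊗ₜ[R] K) * Rm)) := by
          rw [h2]; simp only [mul_assoc]
      _ = Coalgebra.comul b *
            ((Algebra.TensorProduct.comm R H H) Rm * ((1 : H) ⊗ₜ[R] K) * Rm) := by
          simp only [mul_assoc]
  · -- part (2)
    have hK : comulLeft R H ((Algebra.TensorProduct.includeRight : H →ₐ[R] H ⊗[R] H) K) =
        leg13 R H ((Algebra.TensorProduct.includeRight : H →ₐ[R] H ⊗[R] H) K) := by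
      rw [hKR]; simp [comulLeft, leg13, Algebra.TensorProduct.one_def]
    rw [map_mul, map_mul, hCL21, hK, hR2, map_mul, map_mul]
    simp only [mul_assoc]
  · -- part (3)
    have hCRK : comulRight R H ((Algebra.TensorProduct.includeRight : H →ₐ[R] H ⊗[R] H) K) =
        leg23 R H (Coalgebra.comul K) := by
      rw [hKR]; simp [comulRight, leg23]
    have hk3a : leg23 R H ((Algebra.TensorProduct.includeRight : H →ₐ[R] H ⊗[R] H) K) =
        (1 : H) ⊗ₜ[R] ((1 : H) ⊗ₜ[R] K) := by rw [hKR]; simp [leg23]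
    have hk3b : leg13 R H ((Algebra.TensorProduct.includeRight : H →ₐ[R] H ⊗[R] H) K) =
        (1 : H) ⊗ₜ[R] ((1 : H) ⊗ₜ[R] K) := by rw [hKR]; simp [leg13]
    have hk2a : leg23 R H ((Algebra.TensorProduct.includeLeft : H →ₐ[R] H ⊗[R] H) K) =
        (1 : H) ⊗ₜ[R] (K ⊗ₜ[R] (1 : H)) := by
      simp [leg23]
    have hk2b : leg12 R H ((Algebra.TensorProduct.includeRight : H →ₐ[R] H ⊗[R] H) K) =
        (1 : H) ⊗ₜ[R] (K ⊗ₜ[R] (1 : H)) := by rw [hKR]; simp [leg12]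
    have c1 : leg12 R H ((Algebra.TensorProduct.comm R H H) Rm) *
        (leg13 R H ((Algebra.TensorProduct.comm R H H) Rm) *
          leg23 R H ((Algebra.TensorProduct.comm R H H) Rm)) =
        leg23 R H ((Algebra.TensorProduct.comm R H H) Rm) *
        (leg13 R H ((Algebra.TensorProduct.comm R H H) Rm) *
          leg12 R H ((Algebra.TensorProduct.comm R H H) Rm)) := by
      have h := Stmt2Aux.interC Rm hR1 ((Algebra.TensorProduct.comm R H H) Rm)
      rw [hCL21, map_mul, Stmt2Aux.flip12_leg23, Stmt2Aux.flip12_leg13] at h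
      rw [h]; simp only [mul_assoc]
    have c3 : leg12 R H ((Algebra.TensorProduct.comm R H H) Rm) *
        (leg23 R H Rm * leg13 R H Rm) =
        leg13 R H Rm * (leg23 R H Rm *
          leg12 R H ((Algebra.TensorProduct.comm R H H) Rm)) := by
      have h := Stmt2Aux.interC Rm hR1 Rm
      rw [hR2, map_mul, Stmt2Aux.flip12_leg23, Stmt2Aux.flip12_leg13] at h
      rw [h]; simp only [mul_assoc]
    have c2 := Stmt2Aux.leg12_mul_K3 ((Algebra.TensorProduct.comm R H H) Rm) K
    have c4 := (Stmt2Aux.leg13_mul_K2 Rm K).symm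
    rw [map_mul, map_mul, hCR21, hCRK, hK3', map_mul, map_mul, map_mul, hR3,
      map_mul, map_mul, map_mul, map_mul, hk3a, hk3b, hk2a, hk2b]
    exact Stmt2Aux.rearrange _ _ _ _ _ _ _ _ c1 c2 c3 c4
end

section
/- Let H be a quasitriangular bialgebra with R-matrix R and let B ⊆ H be a right coideal subalgebra. Suppose 𝒦 ∈ B⊗H is an invertible universal K-matrix, i.e. it satisfies (K1) 𝒦·Δ(b) = Δ(b)·𝒦 for b ∈ B, (K2) (Δ⊗id)(𝒦) = R₃₂𝒦₁₃R₂₃, and (K3) (id⊗Δ)(𝒦) = R₃₂𝒦₁₃R₂₃𝒦₁₂. Then the element K := (ε⊗id)(𝒦) ∈ H satisfies 𝒦 = R₂₁·K₂·R₁₂, i.e. 𝒦 is recovered from K by conjugation with R-matrices. -/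
open TensorProduct

/-- `ε ⊗ id : H ⊗ H → H`. -/
noncomputable def counitLeft (R H : Type*) [CommRing R] [Ring H] [Bialgebra R H] :
    H ⊗[R] H →ₐ[R] H :=
  (Algebra.TensorProduct.lid R H).toAlgHom.comp
    (Algebra.TensorProduct.map (Bialgebra.counitAlgHom R H) (AlgHom.id R H))

/-- `id ⊗ ε : H ⊗ H → H`. -/
noncomputable def counitRight (R H : Type*) [CommRing R] [Ring H] [Bialgebra R H] :
    H ⊗[R] H →ₐ[R] H :=
  (Algebra.TensorProduct.lid R H).toAlgHom.comp
    ((Algebra.TensorProduct.comm R H R).toAlgHom.comp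
      (Algebra.TensorProduct.map (AlgHom.id R H) (Bialgebra.counitAlgHom R H)))


noncomputable def counitL3 (R H : Type*) [CommRing R] [Ring H] [Bialgebra R H] :
    H ⊗[R] (H ⊗[R] H) →ₐ[R] H ⊗[R] H :=
  (Algebra.TensorProduct.lid R (H ⊗[R] H)).toAlgHom.comp
    (Algebra.TensorProduct.map (Bialgebra.counitAlgHom R H) (AlgHom.id R (H ⊗[R] H)))

theorem counitL3_leg23 {R H : Type*} [CommRing R] [Ring H] [Bialgebra R H] (x : H ⊗[R] H) :
    counitL3 R H (leg23 R H x) = x := by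
  simp [counitL3, leg23]

theorem counitL3_leg13 {R H : Type*} [CommRing R] [Ring H] [Bialgebra R H] (x : H ⊗[R] H) :
    counitL3 R H (leg13 R H x) =
      (Algebra.TensorProduct.includeRight : H →ₐ[R] H ⊗[R] H) (counitLeft R H x) := by
  induction x using TensorProduct.induction_on with
  | zero => simp
  | tmul a b =>
      simp [counitL3, leg13, counitLeft, Algebra.TensorProduct.includeRight,
        TensorProduct.smul_tmul']
  | add a b ha hb => simp only [map_add, ha, hb]

theorem counitL3_comulLeft {R H : Type*} [CommRing R] [Ring H] [Bialgebra R H] (x : H ⊗[R] H) :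
    counitL3 R H (comulLeft R H x) = x := by
  induction x using TensorProduct.induction_on with
  | zero => simp
  | tmul a b =>
      simp only [comulLeft, AlgHom.coe_comp, Function.comp_apply,
        Algebra.TensorProduct.map_tmul, AlgHom.coe_id, id_eq,
        Bialgebra.comulAlgHom_apply]
      have key : ∀ c : H ⊗[R] H,
          counitL3 R H ((Algebra.TensorProduct.assoc R R R H H H).toAlgHom (c ⊗ₜ[R] b)) =
            (TensorProduct.lid R H ((Coalgebra.counit (R := R)).rTensor H c)) ⊗ₜ[R] b := by
        intro c
        induction c using TensorProduct.induction_on with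
        | zero => simp
        | tmul u v => simp [counitL3, TensorProduct.smul_tmul']
        | add u v hu hv => simp only [add_tmul, map_add, hu, hv]
      rw [key, Coalgebra.rTensor_counit_comul]
      simp
  | add a b ha hb => simp only [map_add, ha, hb]

/-- If `𝒦 ∈ B ⊗ H` is an invertible universal K-matrix for a right coideal
subalgebra `B` of a quasitriangular bialgebra `H`, then `K := (ε ⊗ id)(𝒦)` recovers `𝒦` via
`𝒦 = R₂₁ K₂ R₁₂`. -/
theorem stmt_3 {R : Type*} [CommRing R] {H : Type*} [Ring H] [Bialgebra R H]
    (Rm : H ⊗[R] H) (hRunit : IsUnit Rm)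
    (hR1 : ∀ x : H, Rm * Coalgebra.comul x =
      (Algebra.TensorProduct.comm R H H) (Coalgebra.comul x) * Rm)
    (hR2 : comulLeft R H Rm = leg13 R H Rm * leg23 R H Rm)
    (hR3 : comulRight R H Rm = leg13 R H Rm * leg12 R H Rm)
    (hRe1 : counitLeft R H Rm = 1) (hRe2 : counitRight R H Rm = 1)
    (B : Subalgebra R H)
    (hB : ∀ b ∈ B, Coalgebra.comul (R := R) b ∈
      LinearMap.range (TensorProduct.map B.val.toLinearMap (LinearMap.id : H →ₗ[R] H)))
    (𝒦 : H ⊗[R] H) (h𝒦unit : IsUnit 𝒦)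
    (h𝒦B : 𝒦 ∈ LinearMap.range
      (TensorProduct.map B.val.toLinearMap (LinearMap.id : H →ₗ[R] H)))
    (hK1 : ∀ b ∈ B, 𝒦 * Coalgebra.comul b = Coalgebra.comul b * 𝒦)
    (hK2 : comulLeft R H 𝒦 =
      leg23 R H ((Algebra.TensorProduct.comm R H H) Rm) * leg13 R H 𝒦 * leg23 R H Rm)
    (hK3 : comulRight R H 𝒦 =
      leg23 R H ((Algebra.TensorProduct.comm R H H) Rm) * leg13 R H 𝒦 * leg23 R H Rm *
        leg12 R H 𝒦) :
    𝒦 = (Algebra.TensorProduct.comm R H H) Rm *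
        (Algebra.TensorProduct.includeRight : H →ₐ[R] H ⊗[R] H) (counitLeft R H 𝒦) * Rm := by
  have h := congrArg (counitL3 R H) hK2
  rw [map_mul, map_mul, counitL3_comulLeft, counitL3_leg23, counitL3_leg23,
    counitL3_leg13] at h
  exact h
end

section
/- Let H be a quasitriangular bialgebra with R-matrix R and let B be a right H-comodule algebra with coaction Δ_B : B → B⊗H admitting an invertible universal K-matrix 𝒦 ∈ B⊗H (satisfying (K1) 𝒦Δ_B(b) = Δ_B(b)𝒦 for all b ∈ B, (K2) (Δ_B⊗id)(𝒦) = R₃₂𝒦₁₃R₂₃, (K3) (id⊗Δ)(𝒦) = R₃₂𝒦₁₃R₂₃𝒦₁₂). Then for any B-module M and H-modules V, W, the operators e_{M,V} := action of 𝒦 on M⊗V satisfy e_{M⊗V,W} = (id_M ⊗ c_{W,V})(e_{M,W} ⊗ id_V)(id_M ⊗ c_{V,W}) and e_{M,V⊗W} = (id_M ⊗ c_{W,V})(e_{M,W} ⊗ id_V)(id_M ⊗ c_{V,W})(e_{M,V} ⊗ id_W), where c_{V,W} = flip ∘ R is the braiding on H-modules. In other words, the category of B-modules is a braided module category over the category of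 H-modules. -/
open TensorProduct

/-- The representation of `A₁ ⊗ A₂` on `M₁ ⊗ M₂` induced by representations of the factors. -/
noncomputable def repTensor (k : Type*) [CommRing k] {A₁ A₂ M₁ M₂ : Type*}
    [Ring A₁] [Algebra k A₁] [Ring A₂] [Algebra k A₂]
    [AddCommGroup M₁] [Module k M₁] [AddCommGroup M₂] [Module k M₂]
    (ρ₁ : A₁ →ₐ[k] Module.End k M₁) (ρ₂ : A₂ →ₐ[k] Module.End k M₂) :
    A₁ ⊗[k] A₂ →ₐ[k] Module.End k (M₁ ⊗[k] M₂) :=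
  (Module.endTensorEndAlgHom (R := k) (S := k) (A := k)).comp
    (Algebra.TensorProduct.map ρ₁ ρ₂)

section aux
variable {k : Type*} [Field k]
variable {A₁ A₂ A₃ : Type*} [Ring A₁] [Algebra k A₁] [Ring A₂] [Algebra k A₂] [Ring A₃] [Algebra k A₃]
variable {M V W : Type*} [AddCommGroup M] [Module k M] [AddCommGroup V] [Module k V] [AddCommGroup W] [Module k W]
variable (ρ₁ : A₁ →ₐ[k] Module.End k M) (ρ₂ : A₂ →ₐ[k] Module.End k V) (ρ₃ : A₃ →ₐ[k] Module.End k W)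

lemma repTensor_tmul_apply (a : A₁) (b : A₂) (m : M) (v : V) :
    repTensor k ρ₁ ρ₂ (a ⊗ₜ b) (m ⊗ₜ v) = ρ₁ a m ⊗ₜ ρ₂ b v := by
  simp [repTensor, Module.endTensorEndAlgHom_apply]

lemma repTensor_assoc (z : (A₁ ⊗[k] A₂) ⊗[k] A₃) :
    (repTensor k (repTensor k ρ₁ ρ₂) ρ₃ z : ((M ⊗[k] V) ⊗[k] W) →ₗ[k] (M ⊗[k] V) ⊗[k] W) =
    (TensorProduct.assoc k M V W).symm.toLinearMap ∘ₗ
      (repTensor k ρ₁ (repTensor k ρ₂ ρ₃) ((Algebra.TensorProduct.assoc k k k A₁ A₂ A₃) z) :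
        M ⊗[k] (V ⊗[k] W) →ₗ[k] M ⊗[k] (V ⊗[k] W)) ∘ₗ
      (TensorProduct.assoc k M V W).toLinearMap := by
  induction z using TensorProduct.induction_on with
  | zero => ext m v w; simp
  | add x y hx hy =>
      ext m v w
      have := congrFun (congrArg DFunLike.coe hx) ((m ⊗ₜ v) ⊗ₜ w)
      have := congrFun (congrArg DFunLike.coe hy) ((m ⊗ₜ v) ⊗ₜ w)
      simp_all [map_add, LinearMap.add_apply]
  | tmul x c =>
      induction x using TensorProduct.induction_on with
      | zero => ext m v w; simp
      | add x y hx hy =>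
          ext m v w
          have := congrFun (congrArg DFunLike.coe hx) ((m ⊗ₜ v) ⊗ₜ w)
          have := congrFun (congrArg DFunLike.coe hy) ((m ⊗ₜ v) ⊗ₜ w)
          simp_all [add_tmul, map_add, LinearMap.add_apply]
      | tmul a b =>
          ext m v w
          simp [repTensor_tmul_apply, Algebra.TensorProduct.assoc_tmul]

lemma repTensor_includeRight (y : A₂ ⊗[k] A₃) :
    (repTensor k ρ₁ (repTensor k ρ₂ ρ₃)
        ((Algebra.TensorProduct.includeRight : A₂ ⊗[k] A₃ →ₐ[k] A₁ ⊗[k] (A₂ ⊗[k] A₃)) y) :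
      M ⊗[k] (V ⊗[k] W) →ₗ[k] M ⊗[k] (V ⊗[k] W)) =
    LinearMap.lTensor M (repTensor k ρ₂ ρ₃ y : V ⊗[k] W →ₗ[k] V ⊗[k] W) := by
  ext m v w
  induction y using TensorProduct.induction_on with
  | zero => simp
  | add x y hx hy => simp_all [map_add, LinearMap.add_apply]
  | tmul b c =>
      simp [Algebra.TensorProduct.includeRight_apply, repTensor_tmul_apply]

lemma repTensor_13 (z : A₁ ⊗[k] A₃) :
    (repTensor k ρ₁ (repTensor k ρ₂ ρ₃)
        ((Algebra.TensorProduct.map (AlgHom.id k A₁)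
          (Algebra.TensorProduct.includeRight : A₃ →ₐ[k] A₂ ⊗[k] A₃)) z) :
      M ⊗[k] (V ⊗[k] W) →ₗ[k] M ⊗[k] (V ⊗[k] W)) =
    LinearMap.lTensor M (TensorProduct.comm k W V).toLinearMap ∘ₗ
      (TensorProduct.assoc k M W V).toLinearMap ∘ₗ
      LinearMap.rTensor V (repTensor k ρ₁ ρ₃ z : M ⊗[k] W →ₗ[k] M ⊗[k] W) ∘ₗ
      (TensorProduct.assoc k M W V).symm.toLinearMap ∘ₗ
      LinearMap.lTensor M (TensorProduct.comm k V W).toLinearMap := by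
  ext m v w
  induction z using TensorProduct.induction_on with
  | zero => simp
  | add x y hx hy => simp_all [map_add, LinearMap.add_apply]
  | tmul a c => simp [repTensor_tmul_apply]

lemma repTensor_12 (z : A₁ ⊗[k] A₂) :
    (repTensor k ρ₁ (repTensor k ρ₂ ρ₃)
        ((Algebra.TensorProduct.map (AlgHom.id k A₁)
          (Algebra.TensorProduct.includeLeft : A₂ →ₐ[k] A₂ ⊗[k] A₃)) z) :
      M ⊗[k] (V ⊗[k] W) →ₗ[k] M ⊗[k] (V ⊗[k] W)) =
    (TensorProduct.assoc k M V W).toLinearMap ∘ₗ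
      LinearMap.rTensor W (repTensor k ρ₁ ρ₂ z : M ⊗[k] V →ₗ[k] M ⊗[k] V) ∘ₗ
      (TensorProduct.assoc k M V W).symm.toLinearMap := by
  ext m v w
  induction z using TensorProduct.induction_on with
  | zero => simp
  | add x y hx hy => simp_all [map_add, LinearMap.add_apply]
  | tmul a b => simp [repTensor_tmul_apply]

lemma repTensor_comm (y : A₃ ⊗[k] A₂) :
    (repTensor k ρ₂ ρ₃ ((Algebra.TensorProduct.comm k A₃ A₂) y) : V ⊗[k] W →ₗ[k] V ⊗[k] W) =
    (TensorProduct.comm k W V).toLinearMap ∘ₗ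
      (repTensor k ρ₃ ρ₂ y : W ⊗[k] V →ₗ[k] W ⊗[k] V) ∘ₗ
      (TensorProduct.comm k V W).toLinearMap := by
  ext v w
  induction y using TensorProduct.induction_on with
  | zero => simp
  | add x y hx hy => simp_all [map_add, LinearMap.add_apply]
  | tmul c b => simp [repTensor_tmul_apply]

lemma repTensor_comp_left {A₀ : Type*} [Ring A₀] [Algebra k A₀] (f : A₀ →ₐ[k] A₁)
    (z : A₀ ⊗[k] A₂) :
    repTensor k (ρ₁.comp f) ρ₂ z =
      repTensor k ρ₁ ρ₂ ((Algebra.TensorProduct.map f (AlgHom.id k A₂)) z) := by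
  induction z using TensorProduct.induction_on with
  | zero => simp
  | add x y hx hy => simp_all [map_add]
  | tmul a b => simp [repTensor, Module.endTensorEndAlgHom_apply]

lemma repTensor_comp_right {A₀ : Type*} [Ring A₀] [Algebra k A₀] (g : A₀ →ₐ[k] A₂)
    (z : A₁ ⊗[k] A₀) :
    repTensor k ρ₁ (ρ₂.comp g) z =
      repTensor k ρ₁ ρ₂ ((Algebra.TensorProduct.map (AlgHom.id k A₁) g) z) := by
  induction z using TensorProduct.induction_on with
  | zero => simp
  | add x y hx hy => simp_all [map_add]
  | tmul a b => simp [repTensor, Module.endTensorEndAlgHom_apply]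

lemma comm_cancel {X : Type*} [AddCommGroup X] [Module k X]
    (f : X →ₗ[k] M ⊗[k] (W ⊗[k] V)) :
    LinearMap.lTensor M (TensorProduct.comm k V W).toLinearMap ∘ₗ
      (LinearMap.lTensor M (TensorProduct.comm k W V).toLinearMap ∘ₗ f) = f := by
  rw [← LinearMap.comp_assoc, ← LinearMap.lTensor_comp]
  have h : (TensorProduct.comm k V W).toLinearMap ∘ₗ (TensorProduct.comm k W V).toLinearMap
      = LinearMap.id := by ext w v; simp
  rw [h, LinearMap.lTensor_id, LinearMap.id_comp]

end aux

/-- If `B` is a right `H`-comodule algebra over a quasitriangular bialgebra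
`(H, R)` admitting an invertible universal K-matrix `𝒦 ∈ B ⊗ H`, then for every `B`-module `M`
and `H`-modules `V, W` the operators `e_{M,V}` given by the action of `𝒦` satisfy the two
braided module category identities (with braiding `c = flip ∘ R`). -/
theorem stmt_6 {k : Type*} [Field k] {H : Type*} [Ring H] [Bialgebra k H]
    {B : Type*} [Ring B] [Algebra k B]
    (Rm : H ⊗[k] H) (hRunit : IsUnit Rm)
    (hR1 : ∀ x : H, Rm * Coalgebra.comul x =
      (Algebra.TensorProduct.comm k H H) (Coalgebra.comul x) * Rm)
    (hR2 : comulLeft k H Rm = leg13 k H Rm * leg23 k H Rm)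
    (hR3 : comulRight k H Rm = leg13 k H Rm * leg12 k H Rm)
    (ΔB : B →ₐ[k] B ⊗[k] H)
    (hcoassoc : ∀ b : B,
      (Algebra.TensorProduct.assoc k k k B H H)
          ((Algebra.TensorProduct.map ΔB (AlgHom.id k H)) (ΔB b)) =
        (Algebra.TensorProduct.map (AlgHom.id k B) (Bialgebra.comulAlgHom k H)) (ΔB b))
    (𝒦 : B ⊗[k] H) (h𝒦unit : IsUnit 𝒦)
    (hK1 : ∀ b : B, 𝒦 * ΔB b = ΔB b * 𝒦)
    (hK2 : (Algebra.TensorProduct.assoc k k k B H H)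
        ((Algebra.TensorProduct.map ΔB (AlgHom.id k H)) 𝒦) =
      (Algebra.TensorProduct.includeRight : H ⊗[k] H →ₐ[k] B ⊗[k] (H ⊗[k] H))
          ((Algebra.TensorProduct.comm k H H) Rm) *
        (Algebra.TensorProduct.map (AlgHom.id k B)
          (Algebra.TensorProduct.includeRight : H →ₐ[k] H ⊗[k] H)) 𝒦 *
        (Algebra.TensorProduct.includeRight : H ⊗[k] H →ₐ[k] B ⊗[k] (H ⊗[k] H)) Rm)
    (hK3 : (Algebra.TensorProduct.map (AlgHom.id k B) (Bialgebra.comulAlgHom k H)) 𝒦 =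
      (Algebra.TensorProduct.includeRight : H ⊗[k] H →ₐ[k] B ⊗[k] (H ⊗[k] H))
          ((Algebra.TensorProduct.comm k H H) Rm) *
        (Algebra.TensorProduct.map (AlgHom.id k B)
          (Algebra.TensorProduct.includeRight : H →ₐ[k] H ⊗[k] H)) 𝒦 *
        (Algebra.TensorProduct.includeRight : H ⊗[k] H →ₐ[k] B ⊗[k] (H ⊗[k] H)) Rm *
        (Algebra.TensorProduct.map (AlgHom.id k B)
          (Algebra.TensorProduct.includeLeft : H →ₐ[k] H ⊗[k] H)) 𝒦)
    {M V W : Type*} [AddCommGroup M] [Module k M] [AddCommGroup V] [Module k V]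
    [AddCommGroup W] [Module k W]
    (ρM : B →ₐ[k] Module.End k M) (ρV : H →ₐ[k] Module.End k V)
    (ρW : H →ₐ[k] Module.End k W) :
    (let cVW : V ⊗[k] W →ₗ[k] W ⊗[k] V :=
      (TensorProduct.comm k V W).toLinearMap ∘ₗ
        (repTensor k ρV ρW Rm : V ⊗[k] W →ₗ[k] V ⊗[k] W)
    let cWV : W ⊗[k] V →ₗ[k] V ⊗[k] W :=
      (TensorProduct.comm k W V).toLinearMap ∘ₗ
        (repTensor k ρW ρV Rm : W ⊗[k] V →ₗ[k] W ⊗[k] V)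
    let eMV : M ⊗[k] V →ₗ[k] M ⊗[k] V := repTensor k ρM ρV 𝒦
    let eMW : M ⊗[k] W →ₗ[k] M ⊗[k] W := repTensor k ρM ρW 𝒦
    let ρMV : B →ₐ[k] Module.End k (M ⊗[k] V) := (repTensor k ρM ρV).comp ΔB
    let ρVW : H →ₐ[k] Module.End k (V ⊗[k] W) :=
      (repTensor k ρV ρW).comp (Bialgebra.comulAlgHom k H)
    -- the braiding `e_{M ⊗ V, W}` satisfies the first braided module identity
    ((repTensor k ρMV ρW 𝒦 : (M ⊗[k] V) ⊗[k] W →ₗ[k] (M ⊗[k] V) ⊗[k] W) =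
      (TensorProduct.assoc k M V W).symm.toLinearMap ∘ₗ
        LinearMap.lTensor M cWV ∘ₗ
        (TensorProduct.assoc k M W V).toLinearMap ∘ₗ
        LinearMap.rTensor V eMW ∘ₗ
        (TensorProduct.assoc k M W V).symm.toLinearMap ∘ₗ
        LinearMap.lTensor M cVW ∘ₗ
        (TensorProduct.assoc k M V W).toLinearMap) ∧
    -- the braiding `e_{M, V ⊗ W}` satisfies the second braided module identity
    ((repTensor k ρM ρVW 𝒦 : M ⊗[k] (V ⊗[k] W) →ₗ[k] M ⊗[k] (V ⊗[k] W)) =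
      LinearMap.lTensor M cWV ∘ₗ
        (TensorProduct.assoc k M W V).toLinearMap ∘ₗ
        LinearMap.rTensor V eMW ∘ₗ
        (TensorProduct.assoc k M W V).symm.toLinearMap ∘ₗ
        LinearMap.lTensor M cVW ∘ₗ
        (TensorProduct.assoc k M V W).toLinearMap ∘ₗ
        LinearMap.rTensor W eMV ∘ₗ
        (TensorProduct.assoc k M V W).symm.toLinearMap)) := by

  dsimp only
  refine ⟨?_, ?_⟩
  · rw [repTensor_comp_left, repTensor_assoc, hK2, map_mul, map_mul,
      Module.End.mul_eq_comp, Module.End.mul_eq_comp,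
      repTensor_includeRight, repTensor_includeRight, repTensor_13, repTensor_comm]
    simp only [LinearMap.lTensor_comp, LinearMap.comp_assoc, comm_cancel]
  · rw [repTensor_comp_right, hK3, map_mul, map_mul, map_mul,
      Module.End.mul_eq_comp, Module.End.mul_eq_comp, Module.End.mul_eq_comp,
      repTensor_includeRight, repTensor_includeRight, repTensor_13, repTensor_12,
      repTensor_comm]
    simp only [LinearMap.lTensor_comp, LinearMap.comp_assoc, comm_cancel]
end
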